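/- Let A be a complex n×n matrix with A = P J P⁻¹, where P is invertible and J is the Jordan matrix with diagonal blocks J_{r_1}(λ_1), …, J_{r_m}(λ_m). Then there exists an invertible complex n×n matrix Q such that exp(A) = Q J' Q⁻¹, where J' is the Jordan matrix with diagonal blocks J_{r_1}(e^{λ_1}), …, J_{r_m}(e^{λ_m}). Equivalently, if the elementary divisors of A are (X − λ_1)^{r_1}, …, (X − λ_m)^{r_m}, then the elementary divisors of exp(A) are (X − e^{λ_1})^{r_1}, …, (X − e^{λ_m})^{r_m}. -/

import Mathlib

open Matrix

/-- The `r × r` Jordan block `J_r(λ)`. -/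
def jordanBlock {R : Type*} [Zero R] [One R] (r : ℕ) (lam : R) :
    Matrix (Fin r) (Fin r) R :=
  fun i j => if (j : ℕ) = (i : ℕ) then lam else if (j : ℕ) = (i : ℕ) + 1 then 1 else 0

section Tri
variable {r : ℕ} {B : Matrix (Fin r) (Fin r) ℂ}

lemma pow_apply_eq_zero (h0 : ∀ i j : Fin r, (j : ℕ) ≤ i → B i j = 0) :
    ∀ (k : ℕ) (i j : Fin r), (j : ℕ) < (i : ℕ) + k → (B ^ k) i j = 0 := by
  intro k
  induction k with
  | zero =>
    intro i j hij
    simp only [Nat.add_zero] at hij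
    rw [pow_zero, Matrix.one_apply_ne (by intro h; subst h; omega)]
  | succ k ih =>
    intro i j hij
    rw [pow_succ, Matrix.mul_apply]
    refine Finset.sum_eq_zero fun l _ => ?_
    rcases lt_or_ge (l : ℕ) ((i : ℕ) + k) with hl | hl
    · rw [ih i l hl, zero_mul]
    · rw [h0 l j (by omega), mul_zero]

lemma pow_apply_ne_zero (h0 : ∀ i j : Fin r, (j : ℕ) ≤ i → B i j = 0)
    (h1 : ∀ i j : Fin r, (j : ℕ) = (i : ℕ) + 1 → B i j ≠ 0) :
    ∀ (k : ℕ) (i j : Fin r), (j : ℕ) = (i : ℕ) + k → (B ^ k) i j ≠ 0 := by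
  intro k
  induction k with
  | zero =>
    intro i j hij
    have : j = i := Fin.ext (by omega)
    subst this
    rw [pow_zero, Matrix.one_apply_eq]
    exact one_ne_zero
  | succ k ih =>
    intro i j hij
    have hik : (i : ℕ) + k < r := by have := j.isLt; omega
    set l0 : Fin r := ⟨(i : ℕ) + k, hik⟩ with hl0
    rw [pow_succ, Matrix.mul_apply]
    rw [Finset.sum_eq_single l0]
    · exact mul_ne_zero (ih i l0 rfl) (h1 l0 j (by simp [hl0]; omega))
    · intro l _ hl
      rcases lt_or_ge (l : ℕ) ((i : ℕ) + k) with h | h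
      · rw [pow_apply_eq_zero h0 k i l h, zero_mul]
      · have : (i : ℕ) + k < l := by
          rcases h.lt_or_eq with h' | h'
          · exact h'
          · exact absurd (Fin.ext h'.symm : l = l0) hl
        rw [h0 l j (by omega), mul_zero]
    · intro h; exact absurd (Finset.mem_univ l0) h

end Tri

lemma jb0_apply {r : ℕ} (l j : Fin r) :
    jordanBlock r (0 : ℂ) l j = if (j : ℕ) = (l : ℕ) + 1 then 1 else 0 := by
  simp only [jordanBlock]
  split_ifs <;> first | rfl | omega

lemma similar_nilpotent {r : ℕ} (hr : 1 ≤ r) {B : Matrix (Fin r) (Fin r) ℂ}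
    (h0 : ∀ i j : Fin r, (j : ℕ) ≤ i → B i j = 0)
    (h1 : ∀ i j : Fin r, (j : ℕ) = (i : ℕ) + 1 → B i j ≠ 0) :
    ∃ Q : Matrix (Fin r) (Fin r) ℂ, IsUnit Q ∧ B = Q * jordanBlock r (0 : ℂ) * Q⁻¹ := by
  set last : Fin r := ⟨r - 1, by omega⟩ with hlast
  set Q : Matrix (Fin r) (Fin r) ℂ := fun i j => (B ^ (r - 1 - (j : ℕ))) i last with hQ
  have hQtri : Q.BlockTriangular id := by
    intro i j hij
    simp only [id_eq] at hij
    exact pow_apply_eq_zero h0 _ i last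
      (show r - 1 < (i : ℕ) + (r - 1 - (j : ℕ)) by have := j.isLt; omega)
  have hQdiag : ∀ j : Fin r, Q j j ≠ 0 := fun j =>
    pow_apply_ne_zero h0 h1 _ j last
      (show r - 1 = (j : ℕ) + (r - 1 - (j : ℕ)) by have := j.isLt; omega)
  have hQunit : IsUnit Q := by
    rw [Matrix.isUnit_iff_isUnit_det, Matrix.det_of_upperTriangular hQtri, isUnit_iff_ne_zero]
    exact Finset.prod_ne_zero_iff.2 fun j _ => hQdiag j
  have hcomm : B * Q = Q * jordanBlock r (0 : ℂ) := by
    ext i j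
    rw [Matrix.mul_apply, Matrix.mul_apply]
    have hLHS : ∑ l, B i l * Q l j = (B ^ (r - 1 - (j : ℕ) + 1)) i last := by
      rw [pow_succ', Matrix.mul_apply]
    rw [hLHS]
    rcases Nat.eq_zero_or_pos (j : ℕ) with hj | hj
    · have h2 : r - 1 - (j : ℕ) + 1 = r := by have := j.isLt; omega
      rw [h2, pow_apply_eq_zero h0 r i last (show r - 1 < (i : ℕ) + r by omega)]
      refine (Finset.sum_eq_zero fun l _ => ?_).symm
      rw [jb0_apply, if_neg (by omega), mul_zero]
    · have hj1 : (j : ℕ) - 1 < r := by have := j.isLt; omega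
      set l0 : Fin r := ⟨(j : ℕ) - 1, hj1⟩ with hl0
      rw [Finset.sum_eq_single l0]
      · rw [jb0_apply, if_pos (show (j : ℕ) = (j : ℕ) - 1 + 1 by omega), mul_one]
        show (B ^ (r - 1 - (j : ℕ) + 1)) i last = (B ^ (r - 1 - ((j : ℕ) - 1))) i last
        have h3 : r - 1 - (j : ℕ) + 1 = r - 1 - ((j : ℕ) - 1) := by have := j.isLt; omega
        rw [h3]
      · intro l _ hl
        rw [jb0_apply, if_neg, mul_zero]
        intro h
        exact hl (Fin.ext (show (l : ℕ) = (j : ℕ) - 1 by omega))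
      · intro h; exact absurd (Finset.mem_univ l0) h
  refine ⟨Q, hQunit, ?_⟩
  have := Matrix.mul_nonsing_inv Q ((Matrix.isUnit_iff_isUnit_det Q).mp hQunit)
  calc B = B * (Q * Q⁻¹) := by rw [this, mul_one]
    _ = (B * Q) * Q⁻¹ := by rw [mul_assoc]
    _ = Q * jordanBlock r (0 : ℂ) * Q⁻¹ := by rw [hcomm]

lemma jordanBlock_split (r : ℕ) (μ : ℂ) :
    jordanBlock r μ = μ • (1 : Matrix (Fin r) (Fin r) ℂ) + jordanBlock r 0 := by
  ext i j
  rcases eq_or_ne j i with h | h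
  · subst h
    simp [jordanBlock, Matrix.one_apply_eq]
  · have h' : (j : ℕ) ≠ (i : ℕ) := fun hh => h (Fin.ext hh)
    simp [jordanBlock, Matrix.one_apply_ne (Ne.symm h), h']

lemma exp_jordanBlock (r : ℕ) (μ : ℂ) :
    ∃ Q : Matrix (Fin r) (Fin r) ℂ, IsUnit Q ∧
      NormedSpace.exp (jordanBlock r μ) = Q * jordanBlock r (Complex.exp μ) * Q⁻¹ := by
  rcases Nat.eq_zero_or_pos r with hr | hr
  · subst hr
    exact ⟨1, isUnit_one, Subsingleton.elim _ _⟩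
  set N : Matrix (Fin r) (Fin r) ℂ := jordanBlock r 0 with hN
  have hN0 : ∀ i j : Fin r, (j : ℕ) ≤ i → N i j = 0 := fun i j hij => by
    rw [hN, jb0_apply, if_neg (by omega)]
  have hexpN : NormedSpace.exp N = ∑ k ∈ Finset.range r, (k.factorial⁻¹ : ℂ) • N ^ k := by
    rw [NormedSpace.exp_eq_tsum (𝕂 := ℂ)]
    refine tsum_eq_sum fun k hk => ?_
    rw [Finset.mem_range, not_lt] at hk
    ext i j
    rw [Matrix.smul_apply, pow_apply_eq_zero hN0 k i j (by have := j.isLt; omega), smul_zero,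
      Matrix.zero_apply]
  have hCij : ∀ i j : Fin r, (j : ℕ) < i → NormedSpace.exp N i j = 0 := by
    intro i j hij
    rw [hexpN, Matrix.sum_apply]
    refine Finset.sum_eq_zero fun k _ => ?_
    rw [Matrix.smul_apply, pow_apply_eq_zero hN0 k i j (by omega), smul_zero]
  have hCii : ∀ i : Fin r, NormedSpace.exp N i i = 1 := by
    intro i
    rw [hexpN, Matrix.sum_apply, Finset.sum_eq_single 0]
    · simp
    · intro k _ hk
      rw [Matrix.smul_apply, pow_apply_eq_zero hN0 k i i (by omega), smul_zero]
    · intro h; exact absurd (Finset.mem_range.2 hr) h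
  have hCsup : ∀ i j : Fin r, (j : ℕ) = (i : ℕ) + 1 → NormedSpace.exp N i j = 1 := by
    intro i j hij
    have hr2 : 2 ≤ r := by have := j.isLt; omega
    rw [hexpN, Matrix.sum_apply, Finset.sum_eq_single 1]
    · rw [Matrix.smul_apply, pow_one, hN, jb0_apply, if_pos hij]
      simp
    · intro k _ hk
      rw [Matrix.smul_apply]
      rcases Nat.eq_zero_or_pos k with h | h
      · subst h
        rw [pow_zero, Matrix.one_apply_ne (fun h => by subst h; omega), smul_zero]
      · rw [pow_apply_eq_zero hN0 k i j (by omega), smul_zero]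
    · intro h; exact absurd (Finset.mem_range.2 (by omega)) h
  have hsplit := jordanBlock_split r μ
  have hcomm : Commute (μ • (1 : Matrix (Fin r) (Fin r) ℂ)) N := (Commute.one_left N).smul_left μ
  have hexp1 : NormedSpace.exp (μ • (1 : Matrix (Fin r) (Fin r) ℂ)) = Complex.exp μ • 1 := by
    letI : SeminormedRing (Matrix (Fin r) (Fin r) ℂ) := Matrix.linftyOpSemiNormedRing
    letI : NormedRing (Matrix (Fin r) (Fin r) ℂ) := Matrix.linftyOpNormedRing
    letI : NormedAlgebra ℂ (Matrix (Fin r) (Fin r) ℂ) := Matrix.linftyOpNormedAlgebra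
    have h1 : μ • (1 : Matrix (Fin r) (Fin r) ℂ) = algebraMap ℂ _ μ :=
      (Algebra.algebraMap_eq_smul_one μ).symm
    have h2 : Complex.exp μ • (1 : Matrix (Fin r) (Fin r) ℂ) = algebraMap ℂ _ (Complex.exp μ) :=
      (Algebra.algebraMap_eq_smul_one _).symm
    rw [h1, h2, Complex.exp_eq_exp_ℂ]
    exact (NormedSpace.algebraMap_exp_comm μ).symm
  have hmain : NormedSpace.exp (jordanBlock r μ) = Complex.exp μ • NormedSpace.exp N := by
    rw [hsplit, Matrix.exp_add_of_commute _ _ hcomm, hexp1, smul_mul_assoc, one_mul]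
  set B : Matrix (Fin r) (Fin r) ℂ := Complex.exp μ • (NormedSpace.exp N - 1) with hB
  have hB0 : ∀ i j : Fin r, (j : ℕ) ≤ i → B i j = 0 := by
    intro i j hij
    rcases eq_or_lt_of_le hij with h | h
    · have : j = i := Fin.ext h
      subst this
      rw [hB, Matrix.smul_apply, Matrix.sub_apply, hCii, Matrix.one_apply_eq, sub_self, smul_zero]
    · rw [hB, Matrix.smul_apply, Matrix.sub_apply, hCij i j h,
        Matrix.one_apply_ne (fun hh => by subst hh; omega), sub_zero, smul_zero]
  have hB1 : ∀ i j : Fin r, (j : ℕ) = (i : ℕ) + 1 → B i j ≠ 0 := by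
    intro i j hij
    rw [hB, Matrix.smul_apply, Matrix.sub_apply, hCsup i j hij,
      Matrix.one_apply_ne (fun hh => by subst hh; omega), sub_zero, smul_eq_mul, mul_one]
    exact Complex.exp_ne_zero μ
  obtain ⟨Q, hQ, hBQ⟩ := similar_nilpotent hr hB0 hB1
  refine ⟨Q, hQ, ?_⟩
  have hQinv : Q * Q⁻¹ = 1 := Matrix.mul_nonsing_inv Q ((Matrix.isUnit_iff_isUnit_det Q).mp hQ)
  have : NormedSpace.exp (jordanBlock r μ) = Complex.exp μ • 1 + B := by
    rw [hmain, hB, smul_sub, add_sub_cancel]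
  rw [this, hBQ, jordanBlock_split r (Complex.exp μ), Matrix.mul_add, Matrix.add_mul]
  congr 1
  rw [mul_smul_comm, mul_one, smul_mul_assoc, hQinv]

noncomputable def reindexAddHom {l n : Type*} [Fintype l] [Fintype n] (e : l ≃ n) :
    Matrix l l ℂ →+ Matrix n n ℂ :=
  AddMonoidHom.mk' (fun M => Matrix.reindex e e M) (fun A B => by ext i j; simp)

lemma reindex_tsum {l n : Type*} [Fintype l] [DecidableEq l] [Fintype n] [DecidableEq n]
    (e : l ≃ n) (f : ℕ → Matrix l l ℂ) :
    (Matrix.reindex e e) (∑' k, f k) = ∑' k, (Matrix.reindex e e) (f k) := by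
  have hgc : Continuous (reindexAddHom (l := l) (n := n) e) :=
    Continuous.matrix_reindex continuous_id e e
  by_cases h : Summable f
  · have := (h.hasSum.map (reindexAddHom e) hgc).tsum_eq
    simpa [Function.comp_def, reindexAddHom] using this.symm
  · have h2 : ¬ Summable fun k => Matrix.reindex e e (f k) := by
      intro h2
      have hgc' : Continuous (reindexAddHom (l := n) (n := l) e.symm) :=
        Continuous.matrix_reindex continuous_id e.symm e.symm
      have := (h2.hasSum.map (reindexAddHom e.symm) hgc').summable
      simp only [Function.comp_def, reindexAddHom, AddMonoidHom.mk'_apply] at this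
      refine h ?_
      convert this using 2 with k
      simp
    rw [tsum_eq_zero_of_not_summable h, tsum_eq_zero_of_not_summable h2]
    simp

lemma exp_reindex {l n : Type*} [Fintype l] [DecidableEq l] [Fintype n] [DecidableEq n]
    (e : l ≃ n) (M : Matrix l l ℂ) :
    NormedSpace.exp (Matrix.reindex e e M) = Matrix.reindex e e (NormedSpace.exp M) := by
  rw [NormedSpace.exp_eq_tsum (𝕂 := ℂ), NormedSpace.exp_eq_tsum (𝕂 := ℂ), reindex_tsum e]
  refine tsum_congr fun k => ?_
  have hpow : Matrix.reindex e e (M ^ k) = (Matrix.reindex e e M) ^ k := by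
    simpa [Matrix.reindexAlgEquiv_apply] using map_pow (Matrix.reindexAlgEquiv ℂ ℂ e) M k
  rw [← hpow]
  ext i j
  simp

/-- **The Jordan structure is preserved by the matrix exponential.**
If `A = P J P⁻¹` where `J` is the Jordan matrix with blocks `J_{r_1}(λ_1), …, J_{r_m}(λ_m)`,
then there is an invertible `Q` with `exp A = Q J' Q⁻¹`, where `J'` is the Jordan matrix
with blocks `J_{r_1}(e^{λ_1}), …, J_{r_m}(e^{λ_m})`. -/
theorem exp_jordan_form (n : ℕ) (A : Matrix (Fin n) (Fin n) ℂ)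
    (m : ℕ) (r : Fin m → ℕ) (lam : Fin m → ℂ)
    (e : (Σ k : Fin m, Fin (r k)) ≃ Fin n)
    (P : Matrix (Fin n) (Fin n) ℂ) (hP : IsUnit P)
    (hA : A = P * (Matrix.reindex e e
        (Matrix.blockDiagonal' (fun k => jordanBlock (r k) (lam k)))) * P⁻¹) :
    ∃ Q : Matrix (Fin n) (Fin n) ℂ, IsUnit Q ∧
      NormedSpace.exp A = Q * (Matrix.reindex e e
        (Matrix.blockDiagonal' (fun k => jordanBlock (r k) (Complex.exp (lam k))))) * Q⁻¹ := by
  classical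
  choose Qb hQbU hQbE using fun k => exp_jordanBlock (r k) (lam k)
  have hQb1 : ∀ k, Qb k * (Qb k)⁻¹ = 1 := fun k =>
    Matrix.mul_nonsing_inv _ ((Matrix.isUnit_iff_isUnit_det _).mp (hQbU k))
  have hQb2 : ∀ k, (Qb k)⁻¹ * Qb k = 1 := fun k =>
    Matrix.nonsing_inv_mul _ ((Matrix.isUnit_iff_isUnit_det _).mp (hQbU k))
  set bQ := Matrix.blockDiagonal' Qb with hbQ
  set bQi := Matrix.blockDiagonal' (fun k => (Qb k)⁻¹) with hbQi
  set J' := Matrix.blockDiagonal' (fun k => jordanBlock (r k) (Complex.exp (lam k))) with hJ'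
  have hbQ1 : bQ * bQi = 1 := by
    rw [hbQ, hbQi, ← Matrix.blockDiagonal'_mul]
    rw [show (fun k => Qb k * (Qb k)⁻¹) = fun k : Fin m => (1 : Matrix (Fin (r k)) (Fin (r k)) ℂ)
      from funext hQb1]
    exact Matrix.blockDiagonal'_one
  have hbQ2 : bQi * bQ = 1 := by
    rw [hbQ, hbQi, ← Matrix.blockDiagonal'_mul]
    rw [show (fun k => (Qb k)⁻¹ * Qb k) = fun k : Fin m => (1 : Matrix (Fin (r k)) (Fin (r k)) ℂ)
      from funext hQb2]
    exact Matrix.blockDiagonal'_one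
  have hrmul : ∀ X Y : Matrix (Σ k : Fin m, Fin (r k)) (Σ k : Fin m, Fin (r k)) ℂ,
      Matrix.reindex e e (X * Y) = Matrix.reindex e e X * Matrix.reindex e e Y := fun X Y => by
    simpa [Matrix.reindexAlgEquiv_apply] using map_mul (Matrix.reindexAlgEquiv ℂ ℂ e) X Y
  have hbQunit : IsUnit bQ := ⟨⟨bQ, bQi, hbQ1, hbQ2⟩, rfl⟩
  have hrQunit : IsUnit (Matrix.reindex e e bQ) := by
    have := hbQunit.map (Matrix.reindexAlgEquiv ℂ ℂ e)
    simpa [Matrix.reindexAlgEquiv_apply] using this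
  refine ⟨P * Matrix.reindex e e bQ, hP.mul hrQunit, ?_⟩
  have hPinv : P * P⁻¹ = 1 := Matrix.mul_nonsing_inv _ ((Matrix.isUnit_iff_isUnit_det _).mp hP)
  have hQinv : (P * Matrix.reindex e e bQ)⁻¹ = Matrix.reindex e e bQi * P⁻¹ := by
    apply Matrix.inv_eq_right_inv
    calc P * Matrix.reindex e e bQ * (Matrix.reindex e e bQi * P⁻¹)
        = P * (Matrix.reindex e e bQ * Matrix.reindex e e bQi) * P⁻¹ := by
          simp only [mul_assoc]
      _ = 1 := by rw [← hrmul, hbQ1]; simp [hPinv]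
  rw [hQinv, hA, Matrix.exp_conj P _ hP, exp_reindex, Matrix.exp_blockDiagonal']
  have hpi : NormedSpace.exp (fun k => jordanBlock (r k) (lam k))
      = fun k => NormedSpace.exp (jordanBlock (r k) (lam k)) := by
    letI : ∀ k : Fin m, SeminormedRing (Matrix (Fin (r k)) (Fin (r k)) ℂ) :=
      fun k => Matrix.linftyOpSemiNormedRing
    letI : ∀ k : Fin m, NormedRing (Matrix (Fin (r k)) (Fin (r k)) ℂ) :=
      fun k => Matrix.linftyOpNormedRing
    letI : ∀ k : Fin m, NormedAlgebra ℂ (Matrix (Fin (r k)) (Fin (r k)) ℂ) :=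
      fun k => Matrix.linftyOpNormedAlgebra
    letI : ∀ k : Fin m, NormedAlgebra ℚ (Matrix (Fin (r k)) (Fin (r k)) ℂ) :=
      fun k => NormedAlgebra.restrictScalars ℚ ℂ _
    exact Pi.exp_def _
  rw [hpi]
  have hblocks : Matrix.blockDiagonal' (fun k => NormedSpace.exp (jordanBlock (r k) (lam k)))
      = bQ * J' * bQi := by
    rw [show (fun k => NormedSpace.exp (jordanBlock (r k) (lam k)))
      = fun k => Qb k * jordanBlock (r k) (Complex.exp (lam k)) * (Qb k)⁻¹ from funext hQbE]
    rw [hbQ, hbQi, hJ', ← Matrix.blockDiagonal'_mul, ← Matrix.blockDiagonal'_mul]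
  rw [hblocks, hrmul, hrmul]
  simp only [mul_assoc]
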